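/- Let 1 ≤ p < q ≤ ∞ and f ∈ L^p(ℝ³). Then lim_{t→0⁺} t^{(3/2)(1/p − 1/q)} ‖G(·,t) ∗ f‖_{L^q(ℝ³)} = 0. In particular, for p = 3 and q = 6, lim_{t→0⁺} t^{1/4} ‖G(·,t) ∗ f‖_{L^6(ℝ³)} = 0. -/

import Mathlib

open MeasureTheory Real Set Filter
open scoped ENNReal Topology

noncomputable section

/-- Euclidean space `ℝ³`. -/
abbrev E3 := EuclideanSpace ℝ (Fin 3)

/-- The heat kernel on `ℝ³`. -/
def heatKernel (t : ℝ) (x : E3) : ℝ :=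
  (4 * Real.pi * t) ^ (-(3:ℝ)/2) * Real.exp (-‖x‖^2 / (4*t))

namespace HeatAux

lemma lint_shift (g : E3 → ℝ≥0∞) (x : E3) : ∫⁻ y, g (x - y) = ∫⁻ y, g y :=
  (Measure.measurePreserving_sub_left volume x).lintegral_comp_emb
    (MeasurableEquiv.subLeft x).measurableEmbedding g

lemma lint_shift' (g : E3 → ℝ≥0∞) (y : E3) : ∫⁻ x, g (x - y) = ∫⁻ x, g x := by
  simpa [sub_eq_add_neg] using lintegral_add_right_eq_self g (-y)

/-- Young's convolution inequality on `ℝ³`, lintegral form. -/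
lemma young {K F : E3 → ℝ≥0∞} (hK : Measurable K) (hF : Measurable F)
    {pr qr r : ℝ} (hp : 1 ≤ pr) (hpq : pr ≤ qr)
    (hr : r⁻¹ = 1 - pr⁻¹ + qr⁻¹)
    (hIK : ∫⁻ y, K y ^ r ≠ ∞) (hIF : ∫⁻ z, F z ^ pr ≠ ∞) :
    (∫⁻ x, (∫⁻ y, K y * F (x - y)) ^ qr) ^ qr⁻¹
      ≤ (∫⁻ y, K y ^ r) ^ r⁻¹ * (∫⁻ z, F z ^ pr) ^ pr⁻¹ := by
  have hq1 : 1 ≤ qr := hp.trans hpq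
  have hp0 : 0 < pr := lt_of_lt_of_le one_pos hp
  have hq0 : 0 < qr := lt_of_lt_of_le one_pos hq1
  have hw1 : (0:ℝ) < qr⁻¹ := by positivity
  have hip : pr⁻¹ ≤ 1 := by
    rw [inv_le_one_iff₀]; right; linarith
  have hiqp : qr⁻¹ ≤ pr⁻¹ := by
    exact inv_anti₀ hp0 hpq
  have hw3 : (0:ℝ) ≤ pr⁻¹ - qr⁻¹ := by linarith
  have hw2 : (0:ℝ) ≤ r⁻¹ - qr⁻¹ := by rw [hr]; linarith
  have hrpos : 0 < r := by
    have : 0 < r⁻¹ := by rw [hr]; linarith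
    exact inv_pos.mp this
  have hr0 : r ≠ 0 := ne_of_gt hrpos
  set IK := ∫⁻ y, K y ^ r with hIKdef
  set IF := ∫⁻ z, F z ^ pr with hIFdef
  set w1 : ℝ := qr⁻¹ with hw1def
  set w2 : ℝ := r⁻¹ - qr⁻¹ with hw2def
  set w3 : ℝ := pr⁻¹ - qr⁻¹ with hw3def
  have e1 : r * w1 + r * w2 = 1 := by
    have : r * (w1 + w2) = r * r⁻¹ := by rw [hw1def, hw2def]; ring
    rw [mul_inv_cancel₀ hr0] at this; linarith
  have e2 : pr * w1 + pr * w3 = 1 := by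
    have : pr * (w1 + w3) = pr * pr⁻¹ := by rw [hw1def, hw3def]; ring
    rw [mul_inv_cancel₀ (ne_of_gt hp0)] at this; linarith
  -- pointwise Hölder in y, for each x
  have step1 : ∀ x : E3, (∫⁻ y, K y * F (x - y))
      ≤ (∫⁻ y, K y ^ r * F (x - y) ^ pr) ^ w1 * IK ^ w2 * IF ^ w3 := by
    intro x
    have hFx : Measurable fun y => F (x - y) := hF.comp (measurable_const.sub measurable_id)
    have hh := ENNReal.lintegral_prod_norm_pow_le (μ := (volume : Measure E3))
      (Finset.univ : Finset (Fin 3))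
      (f := ![fun y => K y ^ r * F (x - y) ^ pr, fun y => K y ^ r, fun y => F (x - y) ^ pr])
      (fun i _ => by
        fin_cases i
        · exact ((hK.pow_const r).mul (hFx.pow_const pr)).aemeasurable
        · exact (hK.pow_const r).aemeasurable
        · exact (hFx.pow_const pr).aemeasurable)
      (p := ![w1, w2, w3])
      (by
        simp only [Fin.sum_univ_three, Matrix.cons_val_zero, Matrix.cons_val_one,
          Matrix.head_cons, Matrix.cons_val_two, Matrix.tail_cons]
        rw [hw1def, hw2def, hw3def]; linarith [hr])
      (fun i _ => by
        fin_cases i <;>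
          simp only [Matrix.cons_val_zero, Matrix.cons_val_one, Matrix.head_cons,
            Matrix.cons_val_two, Matrix.tail_cons] <;>
          [exact le_of_lt hw1; exact hw2; exact hw3])
    have hpoint : ∀ y : E3, K y * F (x - y)
        = (K y ^ r * F (x - y) ^ pr) ^ w1 * (K y ^ r) ^ w2 * (F (x - y) ^ pr) ^ w3 := by
      intro y
      rw [mul_assoc, ENNReal.mul_rpow_of_nonneg _ _ (le_of_lt hw1),
        ← ENNReal.rpow_mul, ← ENNReal.rpow_mul, ← ENNReal.rpow_mul, ← ENNReal.rpow_mul,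
        mul_mul_mul_comm,
        (ENNReal.rpow_add_of_nonneg (x := K y) (r*w1) (r*w2)
          (mul_nonneg hrpos.le hw1.le) (mul_nonneg hrpos.le hw2)).symm,
        (ENNReal.rpow_add_of_nonneg (x := F (x-y)) (pr*w1) (pr*w3)
          (mul_nonneg hp0.le hw1.le) (mul_nonneg hp0.le hw3)).symm,
        e1, e2, ENNReal.rpow_one, ENNReal.rpow_one]
    calc (∫⁻ y, K y * F (x - y))
        = ∫⁻ y, (K y ^ r * F (x - y) ^ pr) ^ w1 * ((K y ^ r) ^ w2 * (F (x - y) ^ pr) ^ w3) := by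
          congr 1; funext y; rw [hpoint y, mul_assoc]
      _ ≤ (∫⁻ y, K y ^ r * F (x - y) ^ pr) ^ w1 * ((∫⁻ y, K y ^ r) ^ w2
            * (∫⁻ y, F (x - y) ^ pr) ^ w3) := by
          simpa only [Fin.prod_univ_three, Matrix.cons_val_zero, Matrix.cons_val_one,
            Matrix.head_cons, Matrix.cons_val_two, Matrix.tail_cons, mul_assoc] using hh
      _ = (∫⁻ y, K y ^ r * F (x - y) ^ pr) ^ w1 * IK ^ w2 * IF ^ w3 := by
          rw [lint_shift (fun z => F z ^ pr) x, mul_assoc]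
  -- integrate the q-th power
  have hmain : (∫⁻ x, (∫⁻ y, K y * F (x - y)) ^ qr) ≤ IK ^ (1 + w2 * qr) * IF ^ (1 + w3 * qr) := by
    have hC : IK ^ (w2 * qr) * IF ^ (w3 * qr) ≠ ∞ :=
      ENNReal.mul_ne_top (ENNReal.rpow_ne_top_of_nonneg (by positivity) hIK)
        (ENNReal.rpow_ne_top_of_nonneg (by positivity) hIF)
    have swap : (∫⁻ x, ∫⁻ y, K y ^ r * F (x - y) ^ pr) = IK * IF := by
      have hprod : Measurable fun z : E3 × E3 => (K z.2) ^ r * (F (z.1 - z.2)) ^ pr :=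
        ((hK.comp measurable_snd).pow_const r).mul
          ((hF.comp (measurable_fst.sub measurable_snd)).pow_const pr)
      rw [lintegral_lintegral_swap hprod.aemeasurable]
      calc (∫⁻ y, ∫⁻ x, K y ^ r * F (x - y) ^ pr)
          = ∫⁻ y, K y ^ r * ∫⁻ x, F (x - y) ^ pr := by
            congr 1; funext y
            exact lintegral_const_mul _ ((hF.comp (measurable_id.sub measurable_const)).pow_const pr)
        _ = ∫⁻ y, K y ^ r * IF := by
            congr 1; funext y; rw [lint_shift' (fun z => F z ^ pr) y]
        _ = IK * IF := lintegral_mul_const' _ _ hIF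
    calc (∫⁻ x, (∫⁻ y, K y * F (x - y)) ^ qr)
        ≤ ∫⁻ x, ((∫⁻ y, K y ^ r * F (x - y) ^ pr) ^ w1 * IK ^ w2 * IF ^ w3) ^ qr := by
          apply lintegral_mono; intro x
          exact ENNReal.rpow_le_rpow (step1 x) (le_of_lt hq0)
      _ = ∫⁻ x, (∫⁻ y, K y ^ r * F (x - y) ^ pr) * (IK ^ (w2 * qr) * IF ^ (w3 * qr)) := by
          congr 1; funext x
          rw [ENNReal.mul_rpow_of_nonneg _ _ (le_of_lt hq0),
            ENNReal.mul_rpow_of_nonneg _ _ (le_of_lt hq0),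
            ← ENNReal.rpow_mul, ← ENNReal.rpow_mul, ← ENNReal.rpow_mul]
          rw [hw1def, inv_mul_cancel₀ (ne_of_gt hq0), ENNReal.rpow_one, mul_assoc]
      _ = IK * IF * (IK ^ (w2 * qr) * IF ^ (w3 * qr)) := by
          rw [lintegral_mul_const' _ _ hC, swap]
      _ = IK ^ (1 + w2 * qr) * IF ^ (1 + w3 * qr) := by
          rw [ENNReal.rpow_add_of_nonneg (x := IK) 1 (w2*qr) zero_le_one
              (mul_nonneg hw2 hq0.le),
            ENNReal.rpow_add_of_nonneg (x := IF) 1 (w3*qr) zero_le_one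
              (mul_nonneg hw3 hq0.le),
            ENNReal.rpow_one, ENNReal.rpow_one, mul_mul_mul_comm]
  calc (∫⁻ x, (∫⁻ y, K y * F (x - y)) ^ qr) ^ qr⁻¹
      ≤ (IK ^ (1 + w2 * qr) * IF ^ (1 + w3 * qr)) ^ qr⁻¹ :=
        ENNReal.rpow_le_rpow hmain (le_of_lt hw1)
    _ = IK ^ r⁻¹ * IF ^ pr⁻¹ := by
        have hqq : qr * qr⁻¹ = 1 := mul_inv_cancel₀ (ne_of_gt hq0)
        have hE1 : (1 + w2 * qr) * qr⁻¹ = r⁻¹ := by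
          have h : (1 + (r⁻¹ - qr⁻¹) * qr) * qr⁻¹
              = r⁻¹ * (qr * qr⁻¹) + (1 - qr * qr⁻¹) * qr⁻¹ := by ring
          rw [hw2def, h, hqq]; ring
        have hE2 : (1 + w3 * qr) * qr⁻¹ = pr⁻¹ := by
          have h : (1 + (pr⁻¹ - qr⁻¹) * qr) * qr⁻¹
              = pr⁻¹ * (qr * qr⁻¹) + (1 - qr * qr⁻¹) * qr⁻¹ := by ring
          rw [hw3def, h, hqq]; ring
        rw [ENNReal.mul_rpow_of_nonneg _ _ (le_of_lt hw1), ← ENNReal.rpow_mul,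
          ← ENNReal.rpow_mul, hE1, hE2]

/-- Pointwise bound for the convolution, used for `q = ∞`. -/
lemma young_top {K F : E3 → ℝ≥0∞} (hK : Measurable K) (hF : Measurable F)
    {pr : ℝ} (hp : 1 ≤ pr) {M : ℝ≥0∞} (hM : ∀ y, K y ≤ M) (x : E3) :
    (∫⁻ y, K y * F (x - y))
      ≤ (M * ∫⁻ z, F z ^ pr) ^ pr⁻¹ * (∫⁻ y, K y) ^ (1 - pr⁻¹) := by
  have hp0 : 0 < pr := lt_of_lt_of_le one_pos hp
  have hw1 : (0:ℝ) < pr⁻¹ := by positivity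
  have hw2 : (0:ℝ) ≤ 1 - pr⁻¹ := by
    have : pr⁻¹ ≤ 1 := by rw [inv_le_one_iff₀]; right; linarith
    linarith
  have hFx : Measurable fun y => F (x - y) := hF.comp (measurable_const.sub measurable_id)
  have hh := ENNReal.lintegral_prod_norm_pow_le (μ := (volume : Measure E3))
    (Finset.univ : Finset (Fin 2))
    (f := ![fun y => K y * F (x - y) ^ pr, K])
    (fun i _ => by
      fin_cases i
      · exact (hK.mul (hFx.pow_const pr)).aemeasurable
      · exact hK.aemeasurable)
    (p := ![pr⁻¹, 1 - pr⁻¹])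
    (by simp [Fin.sum_univ_two])
    (fun i _ => by fin_cases i <;> simp only [Matrix.cons_val_zero, Matrix.cons_val_one,
        Matrix.head_cons] <;> [exact hw1.le; exact hw2])
  have hpoint : ∀ y : E3, K y * F (x - y)
      = (K y * F (x - y) ^ pr) ^ pr⁻¹ * K y ^ (1 - pr⁻¹) := by
    intro y
    rw [ENNReal.mul_rpow_of_nonneg _ _ hw1.le, ← ENNReal.rpow_mul,
      mul_inv_cancel₀ (ne_of_gt hp0), ENNReal.rpow_one, mul_right_comm,
      (ENNReal.rpow_add_of_nonneg (x := K y) pr⁻¹ (1 - pr⁻¹) hw1.le hw2).symm]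
    simp
  have step : (∫⁻ y, K y * F (x - y))
      ≤ (∫⁻ y, K y * F (x - y) ^ pr) ^ pr⁻¹ * (∫⁻ y, K y) ^ (1 - pr⁻¹) := by
    calc (∫⁻ y, K y * F (x - y))
        = ∫⁻ y, (K y * F (x - y) ^ pr) ^ pr⁻¹ * K y ^ (1 - pr⁻¹) := by
          congr 1; funext y; exact hpoint y
      _ ≤ (∫⁻ y, K y * F (x - y) ^ pr) ^ pr⁻¹ * (∫⁻ y, K y) ^ (1 - pr⁻¹) := by
          simpa only [Fin.prod_univ_two, Matrix.cons_val_zero, Matrix.cons_val_one,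
            Matrix.head_cons] using hh
  refine step.trans (mul_le_mul_left (ENNReal.rpow_le_rpow ?_ hw1.le) _)
  calc (∫⁻ y, K y * F (x - y) ^ pr)
      ≤ ∫⁻ y, M * F (x - y) ^ pr := lintegral_mono fun y => mul_le_mul_left (hM y) _
    _ = M * ∫⁻ y, F (x - y) ^ pr := lintegral_const_mul _ (hFx.pow_const pr)
    _ = M * ∫⁻ z, F z ^ pr := by rw [lint_shift (fun z => F z ^ pr) x]

lemma heatKernel_pos {t : ℝ} (ht : 0 < t) (x : E3) : 0 < heatKernel t x := by
  unfold heatKernel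
  have hπ := Real.pi_pos
  positivity

lemma heatKernel_le {t : ℝ} (ht : 0 < t) (x : E3) :
    heatKernel t x ≤ (4 * π * t) ^ (-(3:ℝ)/2) := by
  unfold heatKernel
  have hπ := Real.pi_pos
  have h1 : rexp (-‖x‖^2 / (4*t)) ≤ 1 := by
    rw [Real.exp_le_one_iff]
    apply div_nonpos_of_nonpos_of_nonneg
    · simp [sq_nonneg]
    · positivity
  calc (4 * π * t) ^ (-(3:ℝ)/2) * rexp (-‖x‖^2 / (4*t))
      ≤ (4 * π * t) ^ (-(3:ℝ)/2) * 1 := by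
        apply mul_le_mul_of_nonneg_left h1
        positivity
    _ = (4 * π * t) ^ (-(3:ℝ)/2) := mul_one _

lemma heatKernel_continuous {t : ℝ} : Continuous (heatKernel t) := by
  unfold heatKernel
  exact continuous_const.mul (Real.continuous_exp.comp
    (((continuous_norm.pow 2).neg).div_const (4*t)))

lemma integrable_gauss {b : ℝ} (hb : 0 < b) :
    Integrable (fun v : E3 => rexp (-b * ‖v‖^2)) := by
  have h := (GaussianFourier.integrable_cexp_neg_mul_sq_norm_add
    (b := (b:ℂ)) (by simpa using hb) 0 (0 : E3)).norm
  refine h.congr (Eventually.of_forall fun v => ?_)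
  simp only [zero_mul, add_zero]
  rw [show (-(b:ℂ) * ‖v‖^2 : ℂ) = ((-b * ‖v‖^2 : ℝ) : ℂ) by push_cast; ring]
  simp [Complex.norm_exp, ← Complex.ofReal_pow]

lemma lint_gauss {b : ℝ} (hb : 0 < b) :
    ∫⁻ v : E3, ENNReal.ofReal (rexp (-b * ‖v‖^2)) = ENNReal.ofReal ((π/b) ^ ((3:ℝ)/2)) := by
  rw [← ofReal_integral_eq_lintegral_ofReal (integrable_gauss hb)
    (Eventually.of_forall fun v => (Real.exp_pos _).le)]
  congr 1
  rw [GaussianFourier.integral_rexp_neg_mul_sq_norm hb]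
  norm_num

lemma gaussLint {t s : ℝ} (ht : 0 < t) (hs : 0 < s) :
    ∫⁻ y : E3, (ENNReal.ofReal (heatKernel t y)) ^ s
      = ENNReal.ofReal ((4*π*t) ^ (-(3:ℝ)/2 * s) * (4*π*t/s) ^ ((3:ℝ)/2)) := by
  have hπ := Real.pi_pos
  have h4 : 0 < 4*π*t := by positivity
  have hb : 0 < s/(4*t) := by positivity
  have key : ∀ y : E3, (ENNReal.ofReal (heatKernel t y)) ^ s
      = ENNReal.ofReal ((4*π*t)^(-(3:ℝ)/2*s)) * ENNReal.ofReal (rexp (-(s/(4*t)) * ‖y‖^2)) := by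
    intro y
    rw [ENNReal.ofReal_rpow_of_pos (heatKernel_pos ht y), ← ENNReal.ofReal_mul (by positivity)]
    congr 1
    unfold heatKernel
    rw [Real.mul_rpow (by positivity) (Real.exp_nonneg _), ← Real.rpow_mul h4.le,
      ← Real.exp_mul]
    congr 1
    field_simp
  simp_rw [key]
  rw [lintegral_const_mul' _ _ ENNReal.ofReal_ne_top, lint_gauss hb,
    ← ENNReal.ofReal_mul (by positivity)]
  have hdiv : π / (s/(4*t)) = 4*π*t/s := by
    rw [div_div_eq_mul_div]; ring
  rw [hdiv]

lemma gaussOne {t : ℝ} (ht : 0 < t) :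
    ∫⁻ y : E3, ENNReal.ofReal (heatKernel t y) = 1 := by
  have hπ := Real.pi_pos
  have h4 : 0 < 4*π*t := by positivity
  have h := gaussLint (s := 1) ht one_pos
  simp only [ENNReal.rpow_one] at h
  rw [h, div_one, mul_one, ← Real.rpow_add h4]
  norm_num

lemma gaussNorm {t s : ℝ} (ht : 0 < t) (hs : 1 ≤ s) :
    (∫⁻ y : E3, (ENNReal.ofReal (heatKernel t y)) ^ s) ^ s⁻¹
      = ENNReal.ofReal (((4*π) ^ (-(3/2)*(1-s⁻¹)) * s ^ (-(3:ℝ)/(2*s))) * t ^ (-(3/2)*(1-s⁻¹))) := by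
  have hπ := Real.pi_pos
  have hs0 : 0 < s := lt_of_lt_of_le one_pos hs
  have h4 : 0 < 4*π*t := by positivity
  rw [gaussLint ht hs0, ENNReal.ofReal_rpow_of_pos (by positivity)]
  congr 1
  have e₁ : ((4*π*t) ^ (-(3:ℝ)/2 * s) * (4*π*t/s) ^ ((3:ℝ)/2))
      = (4*π*t) ^ (-(3:ℝ)/2 * s + 3/2) * s ^ (-(3:ℝ)/2) := by
    have h5 : s ^ (-(3:ℝ)/2) = (s ^ ((3:ℝ)/2))⁻¹ := by
      rw [show -(3:ℝ)/2 = -((3:ℝ)/2) by norm_num, Real.rpow_neg hs0.le]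
    rw [Real.div_rpow h4.le hs0.le, Real.rpow_add h4, h5]
    ring
  rw [e₁, Real.mul_rpow (by positivity) (by positivity), ← Real.rpow_mul h4.le,
    ← Real.rpow_mul hs0.le]
  have hss : s * s⁻¹ = 1 := mul_inv_cancel₀ (ne_of_gt hs0)
  have e₂ : (-(3:ℝ)/2 * s + 3/2) * s⁻¹ = -(3/2)*(1-s⁻¹) := by
    have : (-(3:ℝ)/2 * s + 3/2) * s⁻¹ = -(3:ℝ)/2 * (s * s⁻¹) + 3/2 * s⁻¹ := by ring
    rw [this, hss]; ring
  have e₃ : (-(3:ℝ)/2) * s⁻¹ = -(3:ℝ)/(2*s) := by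
    field_simp
  rw [e₂, e₃]
  rw [show (4*π*t) = (4*π)*t by ring, Real.mul_rpow (by positivity) ht.le]
  ring

lemma tpow_mul {t : ℝ} (ht : 0 < t) (a b : ℝ) :
    t ^ a * (4*π*t) ^ b = (4*π) ^ b * t ^ (a+b) := by
  have hπ := Real.pi_pos
  rw [show (4*π*t) = (4*π)*t by ring, Real.mul_rpow (by positivity) ht.le,
    Real.rpow_add ht]
  ring

lemma aux_tendsto {γ : ℝ} (hγ : 0 < γ) (c : ℝ≥0∞) (hc : c ≠ ∞) :
    Tendsto (fun t : ℝ => ENNReal.ofReal (t ^ γ) * c) (𝓝[>] 0) (𝓝 0) := by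
  have h1 : Tendsto (fun t : ℝ => t ^ γ) (𝓝[>] (0:ℝ)) (𝓝 0) := by
    have h := (Real.continuousAt_rpow_const 0 γ (Or.inr hγ.le)).tendsto
    rw [Real.zero_rpow (ne_of_gt hγ)] at h
    exact h.mono_left nhdsWithin_le_nhds
  have h2 : Tendsto (fun t : ℝ => ENNReal.ofReal (t ^ γ)) (𝓝[>] (0:ℝ)) (𝓝 0) := by
    have := (ENNReal.continuous_ofReal.tendsto 0).comp h1
    simpa [Function.comp_def] using this
  have h3 := ENNReal.Tendsto.mul_const h2 (Or.inr hc)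
  simpa using h3

lemma lint_rpow_ne_top {u : E3 → ℝ} {e : ℝ≥0∞} (he0 : e ≠ 0) (het : e ≠ ∞)
    (hu : MemLp u e volume) : ∫⁻ z, (‖u z‖₊ : ℝ≥0∞) ^ e.toReal ≠ ∞ := by
  have h := hu.2
  rw [eLpNorm_eq_lintegral_rpow_enorm_toReal he0 het] at h
  simp only [enorm_eq_nnnorm] at h
  intro hc
  rw [hc, ENNReal.top_rpow_of_pos (by
    have := ENNReal.toReal_pos he0 het
    positivity)] at h
  exact absurd h (lt_irrefl _)

lemma eLpNorm_eq' {u : E3 → ℝ} {e : ℝ≥0∞} (he0 : e ≠ 0) (het : e ≠ ∞) :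
    eLpNorm u e volume = (∫⁻ z, (‖u z‖₊ : ℝ≥0∞) ^ e.toReal) ^ (e.toReal)⁻¹ := by
  rw [eLpNorm_eq_lintegral_rpow_enorm_toReal he0 het, one_div]
  rfl

/-- Main estimate, for measurable `f`. -/
lemma key_meas (p q : ℝ≥0∞) (hp : 1 ≤ p) (hpq : p < q) (f : E3 → ℝ)
    (hm : Measurable f) (hf : MemLp f p volume) :
    Tendsto (fun t : ℝ =>
        ENNReal.ofReal (t ^ ((3/2) * (p⁻¹.toReal - q⁻¹.toReal))) *
          eLpNorm (fun x => ∫ y, heatKernel t y * f (x - y)) q volume)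
      (𝓝[>] 0) (𝓝 0) := by
  have hπ := Real.pi_pos
  have hp0 : p ≠ 0 := (one_pos.trans_le hp).ne'
  have hq0 : q ≠ 0 := (one_pos.trans_le (hp.trans hpq.le)).ne'
  have hpt : p ≠ ∞ := hpq.ne_top
  set pr : ℝ := p.toReal with hprdef
  have hpr1 : (1:ℝ) ≤ pr := by
    have := ENNReal.toReal_mono hpt hp
    simpa using this
  have hpr0 : 0 < pr := lt_of_lt_of_le one_pos hpr1
  have hipr : p⁻¹.toReal = pr⁻¹ := by rw [ENNReal.toReal_inv]
  set α : ℝ := (3/2) * (p⁻¹.toReal - q⁻¹.toReal) with hαdef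
  have hinvlt : q⁻¹.toReal < p⁻¹.toReal := by
    rw [ENNReal.toReal_lt_toReal (by simp [hq0]) (by simp [hp0])]
    exact ENNReal.inv_lt_inv.mpr hpq
  have hα : 0 < α := by
    apply mul_pos (by norm_num)
    linarith
  rw [ENNReal.tendsto_nhds_zero]
  intro ε hε
  have hε2 : (0:ℝ≥0∞) < ε/2 := ENNReal.half_pos (ne_of_gt hε)
  by_cases hqt : q = ∞
  · subst hqt
    have hαeq : α = (3/2) * pr⁻¹ := by
      rw [hαdef, hipr]; simp
    set s : ℝ := pr + 1 with hsdef
    have hs0 : 0 < s := by rw [hsdef]; linarith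
    have hs1 : (1:ℝ) ≤ s := by rw [hsdef]; linarith
    have hsinv : s⁻¹ < pr⁻¹ := by
      rw [← one_div, ← one_div]
      apply one_div_lt_one_div_of_lt hpr0
      rw [hsdef]; linarith
    have hγ : 0 < α - (3:ℝ)/2 * s⁻¹ := by
      rw [hαeq]; nlinarith
    set C : ℝ≥0∞ := ENNReal.ofReal ((4*π) ^ (-(3:ℝ)/2 * pr⁻¹)) with hCdef
    have hCne : C ≠ ∞ := ENNReal.ofReal_ne_top
    have hC1ne : C + 1 ≠ ∞ := by simp [hCne]
    have hC10 : C + 1 ≠ 0 := by simp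
    set δ : ℝ≥0∞ := (ε/2) * (C+1)⁻¹ with hδdef
    have hδ0 : δ ≠ 0 := by
      apply mul_ne_zero (ne_of_gt hε2)
      simp [hC1ne]
    have hCδ : C * δ ≤ ε/2 := by
      calc C * δ ≤ (C+1) * δ := mul_le_mul_left le_self_add δ
        _ = ε/2 := by
          rw [hδdef, ← mul_assoc, mul_comm (C+1) (ε/2), mul_assoc,
            ENNReal.mul_inv_cancel hC10 hC1ne, mul_one]
    obtain ⟨g, g_supp, hfg, g_cont, g_mem⟩ :=
      hf.exists_hasCompactSupport_eLpNorm_sub_le hpt hδ0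
    have hgm : Measurable g := g_cont.measurable
    have hhm : Measurable (f - g) := hm.sub hgm
    have hh_mem : MemLp (f - g) p volume := hf.sub g_mem
    have gs_mem : MemLp g (ENNReal.ofReal s) volume :=
      g_cont.memLp_of_hasCompactSupport g_supp
    have hGm : Measurable fun z => (‖g z‖₊ : ℝ≥0∞) := hgm.nnnorm.coe_nnreal_ennreal
    have hHm : Measurable fun z => (‖(f - g) z‖₊ : ℝ≥0∞) := hhm.nnnorm.coe_nnreal_ennreal
    have hIGs : ∫⁻ z, (‖g z‖₊ : ℝ≥0∞) ^ s ≠ ∞ := by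
      have h := lint_rpow_ne_top (by
          simp only [ne_eq, ENNReal.ofReal_eq_zero, not_le]; linarith)
        ENNReal.ofReal_ne_top gs_mem
      rwa [ENNReal.toReal_ofReal hs0.le] at h
    have hIHp : ∫⁻ z, (‖(f - g) z‖₊ : ℝ≥0∞) ^ pr ≠ ∞ := by
      rw [hprdef]; exact lint_rpow_ne_top hp0 hpt hh_mem
    have hHnorm : (∫⁻ z, (‖(f - g) z‖₊ : ℝ≥0∞) ^ pr) ^ pr⁻¹ ≤ δ := by
      rw [hprdef, ← eLpNorm_eq' hp0 hpt]; exact hfg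
    have hc' : ENNReal.ofReal ((4*π) ^ (-(3:ℝ)/2 * s⁻¹))
        * (∫⁻ z, (‖g z‖₊ : ℝ≥0∞) ^ s) ^ s⁻¹ ≠ ∞ :=
      ENNReal.mul_ne_top ENNReal.ofReal_ne_top
        (ENNReal.rpow_ne_top_of_nonneg (inv_nonneg.mpr hs0.le) hIGs)
    have ev1 : ∀ᶠ t : ℝ in 𝓝[>] (0:ℝ),
        ENNReal.ofReal (t ^ (α - (3:ℝ)/2 * s⁻¹))
          * (ENNReal.ofReal ((4*π) ^ (-(3:ℝ)/2 * s⁻¹))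
            * (∫⁻ z, (‖g z‖₊ : ℝ≥0∞) ^ s) ^ s⁻¹) ≤ ε/2 :=
      ENNReal.tendsto_nhds_zero.mp (aux_tendsto hγ _ hc') _ hε2
    filter_upwards [ev1, eventually_mem_nhdsWithin] with t ht1 htm
    have ht : 0 < t := htm
    have hKm : Measurable fun y : E3 => ENNReal.ofReal (heatKernel t y) :=
      heatKernel_continuous.measurable.ennreal_ofReal
    set M : ℝ≥0∞ := ENNReal.ofReal ((4*π*t) ^ (-(3:ℝ)/2)) with hMdef
    have hM : ∀ y : E3, ENNReal.ofReal (heatKernel t y) ≤ M := fun y =>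
      ENNReal.ofReal_le_ofReal (heatKernel_le ht y)
    have point : ∀ x : E3, (‖∫ y, heatKernel t y * f (x - y)‖₊ : ℝ≥0∞)
        ≤ (∫⁻ y, ENNReal.ofReal (heatKernel t y) * (‖g (x - y)‖₊ : ℝ≥0∞))
          + (∫⁻ y, ENNReal.ofReal (heatKernel t y) * (‖(f - g) (x - y)‖₊ : ℝ≥0∞)) := by
      intro x
      have b1 : (‖∫ y, heatKernel t y * f (x - y)‖₊ : ℝ≥0∞)
          ≤ ∫⁻ y, ENNReal.ofReal (heatKernel t y) * (‖f (x - y)‖₊ : ℝ≥0∞) := by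
        refine (enorm_integral_le_lintegral_enorm _).trans_eq ?_
        apply lintegral_congr
        intro y
        rw [enorm_mul, Real.enorm_eq_ofReal (heatKernel_pos ht y).le]
        rfl
      refine b1.trans ?_
      have b2 : ∀ y : E3, ENNReal.ofReal (heatKernel t y) * (‖f (x - y)‖₊ : ℝ≥0∞)
          ≤ ENNReal.ofReal (heatKernel t y) * (‖g (x - y)‖₊ : ℝ≥0∞)
            + ENNReal.ofReal (heatKernel t y) * (‖(f - g) (x - y)‖₊ : ℝ≥0∞) := by
        intro y
        rw [← mul_add]
        apply mul_le_mul_right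
        have hsplit : g (x - y) + (f - g) (x - y) = f (x - y) := by simp
        calc ((‖f (x - y)‖₊ : ℝ≥0∞))
            = (‖g (x - y) + (f - g) (x - y)‖₊ : ℝ≥0∞) := by rw [hsplit]
          _ ≤ (‖g (x - y)‖₊ : ℝ≥0∞) + (‖(f - g) (x - y)‖₊ : ℝ≥0∞) := by
              exact_mod_cast nnnorm_add_le _ _
      calc (∫⁻ y, ENNReal.ofReal (heatKernel t y) * (‖f (x - y)‖₊ : ℝ≥0∞))
          ≤ ∫⁻ y, (ENNReal.ofReal (heatKernel t y) * (‖g (x - y)‖₊ : ℝ≥0∞)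
              + ENNReal.ofReal (heatKernel t y) * (‖(f - g) (x - y)‖₊ : ℝ≥0∞)) :=
            lintegral_mono b2
        _ = _ :=
            lintegral_add_left (hKm.mul (hGm.comp (measurable_const.sub measurable_id))) _
    have top_g : ∀ x : E3,
        (∫⁻ y, ENNReal.ofReal (heatKernel t y) * (‖g (x - y)‖₊ : ℝ≥0∞))
          ≤ (M * ∫⁻ z, (‖g z‖₊ : ℝ≥0∞) ^ s) ^ s⁻¹ := by
      intro x
      have h := young_top hKm hGm hs1 hM x
      rwa [gaussOne ht, ENNReal.one_rpow, mul_one] at h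
    have top_h : ∀ x : E3,
        (∫⁻ y, ENNReal.ofReal (heatKernel t y) * (‖(f - g) (x - y)‖₊ : ℝ≥0∞))
          ≤ (M * ∫⁻ z, (‖(f - g) z‖₊ : ℝ≥0∞) ^ pr) ^ pr⁻¹ := by
      intro x
      have h := young_top hKm hHm hpr1 hM x
      rwa [gaussOne ht, ENNReal.one_rpow, mul_one] at h
    have bound : eLpNorm (fun x => ∫ y, heatKernel t y * f (x - y)) ⊤ volume
        ≤ (M * ∫⁻ z, (‖g z‖₊ : ℝ≥0∞) ^ s) ^ s⁻¹
          + (M * ∫⁻ z, (‖(f - g) z‖₊ : ℝ≥0∞) ^ pr) ^ pr⁻¹ := by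
      rw [eLpNorm_exponent_top]
      exact essSup_le_of_ae_le _ (Eventually.of_forall fun x =>
        (point x).trans (add_le_add (top_g x) (top_h x)))
    have hMp : ENNReal.ofReal (t ^ α) * M ^ pr⁻¹ = C := by
      rw [hMdef, ENNReal.ofReal_rpow_of_pos (by positivity),
        ← Real.rpow_mul (by positivity),
        ← ENNReal.ofReal_mul (by positivity), tpow_mul ht α (-(3:ℝ)/2 * pr⁻¹),
        show α + (-(3:ℝ)/2 * pr⁻¹) = 0 by rw [hαeq]; ring, Real.rpow_zero, mul_one, hCdef]
    have hMg : ENNReal.ofReal (t ^ α) * M ^ s⁻¹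
        = ENNReal.ofReal (t ^ (α - (3:ℝ)/2 * s⁻¹))
          * ENNReal.ofReal ((4*π) ^ (-(3:ℝ)/2 * s⁻¹)) := by
      rw [hMdef, ENNReal.ofReal_rpow_of_pos (by positivity),
        ← Real.rpow_mul (by positivity),
        ← ENNReal.ofReal_mul (by positivity), tpow_mul ht α (-(3:ℝ)/2 * s⁻¹),
        show α + (-(3:ℝ)/2 * s⁻¹) = α - (3:ℝ)/2 * s⁻¹ by ring,
        ENNReal.ofReal_mul (by positivity), mul_comm]
    calc ENNReal.ofReal (t ^ α)
          * eLpNorm (fun x => ∫ y, heatKernel t y * f (x - y)) ⊤ volume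
        ≤ ENNReal.ofReal (t ^ α) * ((M * ∫⁻ z, (‖g z‖₊ : ℝ≥0∞) ^ s) ^ s⁻¹
          + (M * ∫⁻ z, (‖(f - g) z‖₊ : ℝ≥0∞) ^ pr) ^ pr⁻¹) := mul_le_mul_right bound _
      _ = (ENNReal.ofReal (t ^ α) * M ^ s⁻¹) * (∫⁻ z, (‖g z‖₊ : ℝ≥0∞) ^ s) ^ s⁻¹
          + (ENNReal.ofReal (t ^ α) * M ^ pr⁻¹)
            * (∫⁻ z, (‖(f - g) z‖₊ : ℝ≥0∞) ^ pr) ^ pr⁻¹ := by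
          rw [ENNReal.mul_rpow_of_nonneg M _ (inv_nonneg.mpr hs0.le),
            ENNReal.mul_rpow_of_nonneg M _ (inv_nonneg.mpr hpr0.le)]
          ring
      _ ≤ ε/2 + ε/2 := by
          apply add_le_add
          · rw [hMg, mul_assoc]
            exact ht1
          · rw [hMp]
            calc C * (∫⁻ z, (‖(f - g) z‖₊ : ℝ≥0∞) ^ pr) ^ pr⁻¹
                ≤ C * δ := mul_le_mul_right hHnorm _
              _ ≤ ε/2 := hCδ
      _ = ε := ENNReal.add_halves ε
  · -- q < ∞
    set qr : ℝ := q.toReal with hqrdef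
    have hqr1 : (1:ℝ) ≤ qr := by
      have := ENNReal.toReal_mono hqt (hp.trans hpq.le)
      simpa using this
    have hqr0 : 0 < qr := lt_of_lt_of_le one_pos hqr1
    have hiqr : q⁻¹.toReal = qr⁻¹ := by rw [ENNReal.toReal_inv]
    have hprqr : pr ≤ qr := ENNReal.toReal_mono hqt hpq.le
    have hbase : 0 < 1 - pr⁻¹ + qr⁻¹ := by
      have h1 : pr⁻¹ ≤ 1 := by rw [inv_le_one_iff₀]; right; linarith
      have h2 : 0 < qr⁻¹ := by positivity
      linarith
    set r : ℝ := (1 - pr⁻¹ + qr⁻¹)⁻¹ with hrdef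
    have hrinv : r⁻¹ = 1 - pr⁻¹ + qr⁻¹ := by rw [hrdef, inv_inv]
    have hr1 : (1:ℝ) ≤ r := by
      rw [hrdef]
      have hle : 1 - pr⁻¹ + qr⁻¹ ≤ 1 := by
        have := inv_anti₀ hpr0 hprqr
        linarith
      exact (one_le_inv₀ hbase).mpr hle
    have hr0 : 0 < r := lt_of_lt_of_le one_pos hr1
    have hαr : α = (3/2) * (1 - r⁻¹) := by
      rw [hαdef, hipr, hiqr, hrinv]; ring
    set C : ℝ≥0∞ := ENNReal.ofReal ((4*π) ^ (-(3/2)*(1-r⁻¹)) * r ^ (-(3:ℝ)/(2*r))) with hCdef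
    have hCne : C ≠ ∞ := ENNReal.ofReal_ne_top
    have hC1ne : C + 1 ≠ ∞ := by simp [hCne]
    have hC10 : C + 1 ≠ 0 := by simp
    set δ : ℝ≥0∞ := (ε/2) * (C+1)⁻¹ with hδdef
    have hδ0 : δ ≠ 0 := by
      apply mul_ne_zero (ne_of_gt hε2)
      simp [hC1ne]
    have hCδ : C * δ ≤ ε/2 := by
      calc C * δ ≤ (C+1) * δ := mul_le_mul_left le_self_add δ
        _ = ε/2 := by
          rw [hδdef, ← mul_assoc, mul_comm (C+1) (ε/2), mul_assoc,
            ENNReal.mul_inv_cancel hC10 hC1ne, mul_one]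
    obtain ⟨g, g_supp, hfg, g_cont, g_mem⟩ :=
      hf.exists_hasCompactSupport_eLpNorm_sub_le hpt hδ0
    have hgm : Measurable g := g_cont.measurable
    have hhm : Measurable (f - g) := hm.sub hgm
    have hh_mem : MemLp (f - g) p volume := hf.sub g_mem
    have gq_mem : MemLp g q volume := g_cont.memLp_of_hasCompactSupport g_supp
    have hGm : Measurable fun z => (‖g z‖₊ : ℝ≥0∞) := hgm.nnnorm.coe_nnreal_ennreal
    have hHm : Measurable fun z => (‖(f - g) z‖₊ : ℝ≥0∞) := hhm.nnnorm.coe_nnreal_ennreal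
    have hIGq : ∫⁻ z, (‖g z‖₊ : ℝ≥0∞) ^ qr ≠ ∞ := by
      rw [hqrdef]; exact lint_rpow_ne_top hq0 hqt gq_mem
    have hIHp : ∫⁻ z, (‖(f - g) z‖₊ : ℝ≥0∞) ^ pr ≠ ∞ := by
      rw [hprdef]; exact lint_rpow_ne_top hp0 hpt hh_mem
    have hHnorm : (∫⁻ z, (‖(f - g) z‖₊ : ℝ≥0∞) ^ pr) ^ pr⁻¹ ≤ δ := by
      rw [hprdef, ← eLpNorm_eq' hp0 hpt]; exact hfg
    have hGnorm_ne : (∫⁻ z, (‖g z‖₊ : ℝ≥0∞) ^ qr) ^ qr⁻¹ ≠ ∞ :=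
      ENNReal.rpow_ne_top_of_nonneg (by positivity) hIGq
    have ev1 : ∀ᶠ t : ℝ in 𝓝[>] (0:ℝ),
        ENNReal.ofReal (t ^ α) * (∫⁻ z, (‖g z‖₊ : ℝ≥0∞) ^ qr) ^ qr⁻¹ ≤ ε/2 :=
      ENNReal.tendsto_nhds_zero.mp (aux_tendsto hα _ hGnorm_ne) _ hε2
    filter_upwards [ev1, eventually_mem_nhdsWithin] with t ht1 htm
    have ht : 0 < t := htm
    have hKm : Measurable fun y : E3 => ENNReal.ofReal (heatKernel t y) :=
      heatKernel_continuous.measurable.ennreal_ofReal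
    -- pointwise bound on the convolution
    have point : ∀ x : E3, (‖∫ y, heatKernel t y * f (x - y)‖₊ : ℝ≥0∞)
        ≤ (∫⁻ y, ENNReal.ofReal (heatKernel t y) * (‖g (x - y)‖₊ : ℝ≥0∞))
          + (∫⁻ y, ENNReal.ofReal (heatKernel t y) * (‖(f - g) (x - y)‖₊ : ℝ≥0∞)) := by
      intro x
      have b1 : (‖∫ y, heatKernel t y * f (x - y)‖₊ : ℝ≥0∞)
          ≤ ∫⁻ y, ENNReal.ofReal (heatKernel t y) * (‖f (x - y)‖₊ : ℝ≥0∞) := by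
        refine (enorm_integral_le_lintegral_enorm _).trans_eq ?_
        apply lintegral_congr
        intro y
        rw [enorm_mul, Real.enorm_eq_ofReal (heatKernel_pos ht y).le]
        rfl
      refine b1.trans ?_
      have b2 : ∀ y : E3, ENNReal.ofReal (heatKernel t y) * (‖f (x - y)‖₊ : ℝ≥0∞)
          ≤ ENNReal.ofReal (heatKernel t y) * (‖g (x - y)‖₊ : ℝ≥0∞)
            + ENNReal.ofReal (heatKernel t y) * (‖(f - g) (x - y)‖₊ : ℝ≥0∞) := by
        intro y
        rw [← mul_add]
        apply mul_le_mul_right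
        have hsplit : g (x - y) + (f - g) (x - y) = f (x - y) := by simp
        calc ((‖f (x - y)‖₊ : ℝ≥0∞))
            = (‖g (x - y) + (f - g) (x - y)‖₊ : ℝ≥0∞) := by rw [hsplit]
          _ ≤ (‖g (x - y)‖₊ : ℝ≥0∞) + (‖(f - g) (x - y)‖₊ : ℝ≥0∞) := by
              exact_mod_cast nnnorm_add_le _ _
      calc (∫⁻ y, ENNReal.ofReal (heatKernel t y) * (‖f (x - y)‖₊ : ℝ≥0∞))
          ≤ ∫⁻ y, (ENNReal.ofReal (heatKernel t y) * (‖g (x - y)‖₊ : ℝ≥0∞)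
              + ENNReal.ofReal (heatKernel t y) * (‖(f - g) (x - y)‖₊ : ℝ≥0∞)) :=
            lintegral_mono b2
        _ = _ :=
            lintegral_add_left (hKm.mul (hGm.comp (measurable_const.sub measurable_id))) _
    have hΦg_meas : Measurable fun x : E3 =>
        ∫⁻ y, ENNReal.ofReal (heatKernel t y) * (‖g (x - y)‖₊ : ℝ≥0∞) :=
      Measurable.lintegral_prod_right'
        ((hKm.comp measurable_snd).mul (hGm.comp (measurable_fst.sub measurable_snd)))
    have hΦh_meas : Measurable fun x : E3 =>
        ∫⁻ y, ENNReal.ofReal (heatKernel t y) * (‖(f - g) (x - y)‖₊ : ℝ≥0∞) :=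
      Measurable.lintegral_prod_right'
        ((hKm.comp measurable_snd).mul (hHm.comp (measurable_fst.sub measurable_snd)))
    have young_g : (∫⁻ x, (∫⁻ y, ENNReal.ofReal (heatKernel t y)
          * (‖g (x - y)‖₊ : ℝ≥0∞)) ^ qr) ^ qr⁻¹
        ≤ (∫⁻ z, (‖g z‖₊ : ℝ≥0∞) ^ qr) ^ qr⁻¹ := by
      have h := young (r := 1) hKm hGm hqr1 (le_refl qr) (by ring)
        (by simp only [ENNReal.rpow_one]; rw [gaussOne ht]; exact ENNReal.one_ne_top) hIGq
      simp only [ENNReal.rpow_one, inv_one] at h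
      rwa [gaussOne ht, one_mul] at h
    have young_h : (∫⁻ x, (∫⁻ y, ENNReal.ofReal (heatKernel t y)
          * (‖(f - g) (x - y)‖₊ : ℝ≥0∞)) ^ qr) ^ qr⁻¹
        ≤ (∫⁻ y, ENNReal.ofReal (heatKernel t y) ^ r) ^ r⁻¹
          * (∫⁻ z, (‖(f - g) z‖₊ : ℝ≥0∞) ^ pr) ^ pr⁻¹ :=
      young hKm hHm hpr1 hprqr hrinv
        (by rw [gaussLint ht hr0]; exact ENNReal.ofReal_ne_top) hIHp
    have bound : eLpNorm (fun x => ∫ y, heatKernel t y * f (x - y)) q volume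
        ≤ (∫⁻ z, (‖g z‖₊ : ℝ≥0∞) ^ qr) ^ qr⁻¹
          + (∫⁻ y, ENNReal.ofReal (heatKernel t y) ^ r) ^ r⁻¹
            * (∫⁻ z, (‖(f - g) z‖₊ : ℝ≥0∞) ^ pr) ^ pr⁻¹ := by
      rw [eLpNorm_eq' hq0 hqt, ← hqrdef]
      calc (∫⁻ x, (‖∫ y, heatKernel t y * f (x - y)‖₊ : ℝ≥0∞) ^ qr) ^ qr⁻¹
          ≤ (∫⁻ x, ((∫⁻ y, ENNReal.ofReal (heatKernel t y) * (‖g (x - y)‖₊ : ℝ≥0∞))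
              + (∫⁻ y, ENNReal.ofReal (heatKernel t y)
                  * (‖(f - g) (x - y)‖₊ : ℝ≥0∞))) ^ qr) ^ qr⁻¹ := by
            apply ENNReal.rpow_le_rpow _ (by positivity)
            apply lintegral_mono
            intro x
            exact ENNReal.rpow_le_rpow (point x) hqr0.le
        _ ≤ (∫⁻ x, (∫⁻ y, ENNReal.ofReal (heatKernel t y)
                * (‖g (x - y)‖₊ : ℝ≥0∞)) ^ qr) ^ qr⁻¹
            + (∫⁻ x, (∫⁻ y, ENNReal.ofReal (heatKernel t y)
                * (‖(f - g) (x - y)‖₊ : ℝ≥0∞)) ^ qr) ^ qr⁻¹ := by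
            have h := ENNReal.lintegral_Lp_add_le (μ := (volume : Measure E3))
              hΦg_meas.aemeasurable hΦh_meas.aemeasurable hqr1
            simpa only [one_div, Pi.add_apply] using h
        _ ≤ _ := add_le_add young_g young_h
    have hKnorm : ENNReal.ofReal (t ^ α)
        * (∫⁻ y, ENNReal.ofReal (heatKernel t y) ^ r) ^ r⁻¹ = C := by
      rw [gaussNorm ht hr1, ← ENNReal.ofReal_mul (by positivity), hCdef]
      congr 1
      rw [show (-(3/2)*(1-r⁻¹)) = -α by rw [hαr]; ring]
      rw [mul_comm (t ^ α) _, mul_assoc, ← Real.rpow_add ht]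
      norm_num
    calc ENNReal.ofReal (t ^ α)
          * eLpNorm (fun x => ∫ y, heatKernel t y * f (x - y)) q volume
        ≤ ENNReal.ofReal (t ^ α) * ((∫⁻ z, (‖g z‖₊ : ℝ≥0∞) ^ qr) ^ qr⁻¹
          + (∫⁻ y, ENNReal.ofReal (heatKernel t y) ^ r) ^ r⁻¹
            * (∫⁻ z, (‖(f - g) z‖₊ : ℝ≥0∞) ^ pr) ^ pr⁻¹) := mul_le_mul_right bound _
      _ = ENNReal.ofReal (t ^ α) * (∫⁻ z, (‖g z‖₊ : ℝ≥0∞) ^ qr) ^ qr⁻¹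
          + (ENNReal.ofReal (t ^ α) * (∫⁻ y, ENNReal.ofReal (heatKernel t y) ^ r) ^ r⁻¹)
            * (∫⁻ z, (‖(f - g) z‖₊ : ℝ≥0∞) ^ pr) ^ pr⁻¹ := by ring
      _ ≤ ε/2 + C * δ := by
          apply add_le_add ht1
          rw [hKnorm]
          exact mul_le_mul_right hHnorm _
      _ ≤ ε/2 + ε/2 := add_le_add_right hCδ _
      _ = ε := ENNReal.add_halves ε
/-- Main estimate for arbitrary `MemLp` functions. -/
lemma key (p q : ℝ≥0∞) (hp : 1 ≤ p) (hpq : p < q) (f : E3 → ℝ) (hf : MemLp f p volume) :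
    Tendsto (fun t : ℝ =>
        ENNReal.ofReal (t ^ ((3/2) * (p⁻¹.toReal - q⁻¹.toReal))) *
          eLpNorm (fun x => ∫ y, heatKernel t y * f (x - y)) q volume)
      (𝓝[>] 0) (𝓝 0) := by
  have hsm := hf.1
  have hmeas : Measurable (hsm.mk f) := hsm.stronglyMeasurable_mk.measurable
  have hae : f =ᵐ[volume] hsm.mk f := hsm.ae_eq_mk
  have hf' : MemLp (hsm.mk f) p volume := hf.ae_eq hae
  have hconv : ∀ t : ℝ, ∀ x : E3,
      (∫ y, heatKernel t y * (hsm.mk f) (x - y)) = ∫ y, heatKernel t y * f (x - y) := by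
    intro t x
    apply integral_congr_ae
    have h := (Measure.measurePreserving_sub_left
      (volume : Measure E3) x).quasiMeasurePreserving.ae_eq hae
    filter_upwards [h] with y hy
    simp only [Function.comp_apply] at hy
    rw [hy]
  have h := key_meas p q hp hpq (hsm.mk f) hmeas hf'
  exact h.congr fun t => by
    rw [show (fun x => ∫ y, heatKernel t y * (hsm.mk f) (x - y))
        = (fun x => ∫ y, heatKernel t y * f (x - y)) from funext fun x => hconv t x]

end HeatAux

theorem heat_semigroup_vanishing_at_zero :
    (∀ p q : ℝ≥0∞, 1 ≤ p → p < q →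
      ∀ f : E3 → ℝ, MemLp f p volume →
        Tendsto (fun t : ℝ =>
            ENNReal.ofReal (t ^ ((3/2) * (p⁻¹.toReal - q⁻¹.toReal))) *
              eLpNorm (fun x => ∫ y, heatKernel t y * f (x - y)) q volume)
          (𝓝[>] 0) (𝓝 0)) ∧
    (∀ f : E3 → ℝ, MemLp f 3 volume →
      Tendsto (fun t : ℝ =>
          ENNReal.ofReal (t ^ (1/4 : ℝ)) *
            eLpNorm (fun x => ∫ y, heatKernel t y * f (x - y)) 6 volume)
        (𝓝[>] 0) (𝓝 0)) := by
  constructor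
  · exact fun p q hp hpq f hf => HeatAux.key p q hp hpq f hf
  · intro f hf
    have h := HeatAux.key 3 6 (by norm_num) (by norm_num) f hf
    have he : (3/2) * ((3:ℝ≥0∞)⁻¹.toReal - (6:ℝ≥0∞)⁻¹.toReal) = (1/4 : ℝ) := by
      rw [ENNReal.toReal_inv, ENNReal.toReal_inv]
      norm_num
    simp only [he] at h
    exact h
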